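/- Let θ ∈ C¹([0,1]) be positive, let β > 0, v ∈ C([0,1]) with 0 < c₀ ≤ v(x) ≤ C₀, and set η = min{1,β}/2. Then max_{x∈[0,1]} θ(x)^{2+β−η} ≤ C(∫₀¹ θ dx)^{2+β−η} + C (∫₀¹ (θ^β θ_x²)/(v θ^{1+η}) dx) · (∫₀¹ v θ dx), where C depends only on β, c₀, C₀. -/

import Mathlib

open Set Real intervalIntegral

/-- Cauchy–Schwarz inequality for interval integrals of continuous functions on `[0,1]`. -/
lemma cs_interval (f g : ℝ → ℝ) (hf : ContinuousOn f (Set.Icc 0 1))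
    (hg : ContinuousOn g (Set.Icc 0 1)) :
    (∫ y in (0:ℝ)..1, f y * g y) ^ 2 ≤
      (∫ y in (0:ℝ)..1, f y ^ 2) * (∫ y in (0:ℝ)..1, g y ^ 2) := by
  have h01 : (0:ℝ) ≤ 1 := zero_le_one
  have hf2 : IntervalIntegrable (fun y => f y ^ 2) MeasureTheory.volume 0 1 :=
    (hf.pow 2).intervalIntegrable_of_Icc h01
  have hg2 : IntervalIntegrable (fun y => g y ^ 2) MeasureTheory.volume 0 1 :=
    (hg.pow 2).intervalIntegrable_of_Icc h01
  have hfg : IntervalIntegrable (fun y => f y * g y) MeasureTheory.volume 0 1 :=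
    (hf.mul hg).intervalIntegrable_of_Icc h01
  set A := ∫ y in (0:ℝ)..1, f y ^ 2 with hA
  set B := ∫ y in (0:ℝ)..1, g y ^ 2 with hB
  set I := ∫ y in (0:ℝ)..1, f y * g y with hI
  have key : ∀ t : ℝ, 0 ≤ A * (t * t) + (-2 * I) * t + B := by
    intro t
    have h1 : (∫ y in (0:ℝ)..1, (t * f y - g y) ^ 2)
        = A * (t * t) + (-2 * I) * t + B := by
      have hrw : (fun y => (t * f y - g y) ^ 2)
          = fun y => t ^ 2 * f y ^ 2 + ((-2 * t) * (f y * g y) + g y ^ 2) := by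
        funext y; ring
      rw [hrw, intervalIntegral.integral_add (hf2.const_mul _) ((hfg.const_mul _).add hg2),
        intervalIntegral.integral_add (hfg.const_mul _) hg2,
        intervalIntegral.integral_const_mul, intervalIntegral.integral_const_mul,
        ← hA, ← hB, ← hI]
      ring
    have h2 : 0 ≤ ∫ y in (0:ℝ)..1, (t * f y - g y) ^ 2 :=
      intervalIntegral.integral_nonneg h01 (fun y _ => sq_nonneg _)
    linarith [h1 ▸ h2]
  have hd := discrim_le_zero key
  rw [discrim] at hd
  nlinarith [hd]

theorem pointwise_temperature_estimate (β c₀ C₀ : ℝ)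
    (hβ : 0 < β) (hc₀ : 0 < c₀) (hC₀ : c₀ ≤ C₀) :
    ∃ C > 0, ∀ θ θ' v : ℝ → ℝ,
      (∀ x ∈ Set.Icc (0:ℝ) 1, HasDerivAt θ (θ' x) x) →
      ContinuousOn θ' (Set.Icc 0 1) →
      (∀ x ∈ Set.Icc (0:ℝ) 1, 0 < θ x) →
      ContinuousOn v (Set.Icc 0 1) →
      (∀ x ∈ Set.Icc (0:ℝ) 1, c₀ ≤ v x ∧ v x ≤ C₀) →
      ∀ x ∈ Set.Icc (0:ℝ) 1,
        θ x ^ (2 + β - min 1 β / 2) ≤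
          C * (∫ y in (0:ℝ)..1, θ y) ^ (2 + β - min 1 β / 2)
          + C * (∫ y in (0:ℝ)..1,
              θ y ^ β * θ' y ^ 2 / (v y * θ y ^ (1 + min 1 β / 2)))
            * ∫ y in (0:ℝ)..1, v y * θ y := by
  have h01 : (0:ℝ) ≤ 1 := zero_le_one
  set η : ℝ := min 1 β / 2 with hηdef
  have hm : 0 < min 1 β := lt_min one_pos hβ
  have hηpos : 0 < η := by rw [hηdef]; linarith
  have hβη : 0 < β - η := by
    have h1 : min 1 β ≤ β := min_le_right 1 β
    rw [hηdef]; linarith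
  set α : ℝ := (2 + β - η) / 2 with hαdef
  have hα1 : 1 < α := by rw [hαdef]; linarith
  have hαpos : 0 < α := by linarith
  have hαm1 : α - 1 = (β - η) / 2 := by rw [hαdef]; ring
  refine ⟨2 + 2 * α ^ 2, by positivity, ?_⟩
  intro θ θ' v hθd hθ'c hθpos hvc hvb x hx
  have hθc : ContinuousOn θ (Set.Icc 0 1) :=
    fun y hy => (hθd y hy).continuousAt.continuousWithinAt
  have hθne : ∀ y ∈ Set.Icc (0:ℝ) 1, θ y ≠ 0 := fun y hy => (hθpos y hy).ne'
  have hvpos : ∀ y ∈ Set.Icc (0:ℝ) 1, 0 < v y := fun y hy => lt_of_lt_of_le hc₀ (hvb y hy).1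
  set I := ∫ y in (0:ℝ)..1, θ y with hIdef
  set D := ∫ y in (0:ℝ)..1, θ y ^ β * θ' y ^ 2 / (v y * θ y ^ (1 + η)) with hDdef
  set E := ∫ y in (0:ℝ)..1, v y * θ y with hEdef
  -- mean value point for θ
  have hθint : IntervalIntegrable θ MeasureTheory.volume 0 1 :=
    hθc.intervalIntegrable_of_Icc h01
  obtain ⟨a, ha, hmin⟩ := isCompact_Icc.exists_isMinOn (⟨0, by norm_num⟩ : (Set.Icc (0:ℝ) 1).Nonempty) hθc
  obtain ⟨b, hb, hmax⟩ := isCompact_Icc.exists_isMaxOn (⟨0, by norm_num⟩ : (Set.Icc (0:ℝ) 1).Nonempty) hθc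
  have hIa : θ a ≤ I := by
    have h := intervalIntegral.integral_mono_on h01 (_root_.intervalIntegrable_const (c := θ a)) hθint
      (fun y hy => isMinOn_iff.mp hmin y hy)
    simpa using h
  have hIb : I ≤ θ b := by
    have h := intervalIntegral.integral_mono_on h01 hθint (_root_.intervalIntegrable_const (c := θ b))
      (fun y hy => isMaxOn_iff.mp hmax y hy)
    simpa using h
  obtain ⟨x₀, hx₀mem, hx₀⟩ : ∃ x₀ ∈ Set.Icc (0:ℝ) 1, θ x₀ = I := by
    have hsub : Set.uIcc a b ⊆ Set.Icc 0 1 := Set.ordConnected_Icc.uIcc_subset ha hb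
    have hIV := intermediate_value_uIcc (hθc.mono hsub)
    have hmem : I ∈ Set.uIcc (θ a) (θ b) := Set.Icc_subset_uIcc ⟨hIa, hIb⟩
    obtain ⟨x₀, hx₀m, h⟩ := hIV hmem
    exact ⟨x₀, hsub hx₀m, h⟩
  have hIpos : 0 < I := hx₀ ▸ hθpos x₀ hx₀mem
  -- the derivative of θ ^ α
  set G : ℝ → ℝ := fun y => θ' y * α * θ y ^ (α - 1) with hGdef
  have hGc : ContinuousOn G (Set.Icc 0 1) :=
    (hθ'c.mul continuousOn_const).mul
      (hθc.rpow_const (fun y hy => Or.inl (hθne y hy)))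
  have hsub' : Set.uIcc x₀ x ⊆ Set.Icc 0 1 := Set.ordConnected_Icc.uIcc_subset hx₀mem hx
  have hG' : ∀ y ∈ Set.uIcc x₀ x, HasDerivAt (fun z => θ z ^ α) (G y) y :=
    fun y hy => (hθd y (hsub' hy)).rpow_const (Or.inl (hθne y (hsub' hy)))
  have hGint : IntervalIntegrable G MeasureTheory.volume 0 1 :=
    hGc.intervalIntegrable_of_Icc h01
  have hGint' : IntervalIntegrable G MeasureTheory.volume x₀ x :=
    (hGc.mono hsub').intervalIntegrable
  have hFTC : (∫ y in x₀..x, G y) = θ x ^ α - θ x₀ ^ α :=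
    intervalIntegral.integral_eq_sub_of_hasDerivAt hG' hGint'
  set J := ∫ y in (0:ℝ)..1, |G y| with hJdef
  have habsint : IntervalIntegrable (fun y => |G y|) MeasureTheory.volume 0 1 := hGint.abs
  have hJ0 : 0 ≤ J :=
    intervalIntegral.integral_nonneg h01 (fun y _ => abs_nonneg _)
  have hJ : |∫ y in x₀..x, G y| ≤ J := by
    rcases le_total x₀ x with h | h
    · have h1 : ‖∫ y in x₀..x, G y‖ ≤ ∫ y in x₀..x, ‖G y‖ :=
        intervalIntegral.norm_integral_le_integral_norm h
      simp only [Real.norm_eq_abs] at h1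
      refine h1.trans ?_
      exact intervalIntegral.integral_mono_interval hx₀mem.1 h hx.2
        (Filter.Eventually.of_forall fun y => abs_nonneg _) habsint
    · rw [intervalIntegral.integral_symm, abs_neg]
      have h1 : ‖∫ y in x..x₀, G y‖ ≤ ∫ y in x..x₀, ‖G y‖ :=
        intervalIntegral.norm_integral_le_integral_norm h
      simp only [Real.norm_eq_abs] at h1
      refine h1.trans ?_
      exact intervalIntegral.integral_mono_interval hx.1 h hx₀mem.2
        (Filter.Eventually.of_forall fun y => abs_nonneg _) habsint
  have hmain : θ x ^ α ≤ I ^ α + J := by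
    have h1 : θ x ^ α - θ x₀ ^ α ≤ J := hFTC ▸ (le_abs_self _).trans hJ
    rw [hx₀] at h1; linarith
  -- Cauchy–Schwarz
  set f : ℝ → ℝ := fun y => Real.sqrt (θ y ^ β * θ' y ^ 2 / (v y * θ y ^ (1 + η))) with hfdef
  set g : ℝ → ℝ := fun y => α * Real.sqrt (v y * θ y) with hgdef
  have hQnonneg : ∀ y ∈ Set.Icc (0:ℝ) 1,
      0 ≤ θ y ^ β * θ' y ^ 2 / (v y * θ y ^ (1 + η)) := by
    intro y hy
    have h1 := hθpos y hy
    have h2 := hvpos y hy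
    positivity
  have hfc : ContinuousOn f (Set.Icc 0 1) := by
    apply Real.continuous_sqrt.comp_continuousOn
    apply ContinuousOn.div
    · exact (hθc.rpow_const (fun y hy => Or.inl (hθne y hy))).mul (hθ'c.pow 2)
    · exact hvc.mul (hθc.rpow_const (fun y hy => Or.inl (hθne y hy)))
    · intro y hy
      have h1 := Real.rpow_pos_of_pos (hθpos y hy) (1 + η)
      have h2 := hvpos y hy
      positivity
  have hgc : ContinuousOn g (Set.Icc 0 1) :=
    continuousOn_const.mul (Real.continuous_sqrt.comp_continuousOn (hvc.mul hθc))
  -- pointwise identity  f * g = |G|  on [0,1]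
  have hpt : ∀ y ∈ Set.Icc (0:ℝ) 1, f y * g y = |G y| := by
    intro y hy
    have hθy := hθpos y hy
    have hvy := hvpos y hy
    have hQ := hQnonneg y hy
    have hvθ : (0:ℝ) ≤ v y * θ y := by positivity
    have hmul : θ y ^ β * θ' y ^ 2 / (v y * θ y ^ (1 + η)) * (v y * θ y)
        = θ' y ^ 2 * θ y ^ (β - η) := by
      have hpow : θ y ^ (β - η) = θ y ^ β * θ y / θ y ^ (1 + η) := by
        have hb1 : β - η = (β + 1) - (1 + η) := by ring
        rw [hb1, Real.rpow_sub hθy, Real.rpow_add_one hθy.ne']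
      rw [hpow]
      have hne1 : θ y ^ (1 + η) ≠ 0 := (Real.rpow_pos_of_pos hθy _).ne'
      field_simp
    have hsqrtpow : Real.sqrt (θ y ^ (β - η)) = θ y ^ (α - 1) := by
      rw [Real.sqrt_eq_rpow, ← Real.rpow_mul hθy.le, hαm1]
      congr 1
      ring
    calc f y * g y
        = α * (Real.sqrt (θ y ^ β * θ' y ^ 2 / (v y * θ y ^ (1 + η))) *
            Real.sqrt (v y * θ y)) := by rw [hfdef, hgdef]; ring
      _ = α * Real.sqrt (θ y ^ β * θ' y ^ 2 / (v y * θ y ^ (1 + η)) * (v y * θ y)) := by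
          rw [← Real.sqrt_mul hQ]
      _ = α * Real.sqrt (θ' y ^ 2 * θ y ^ (β - η)) := by rw [hmul]
      _ = α * (|θ' y| * θ y ^ (α - 1)) := by
          rw [Real.sqrt_mul (sq_nonneg _), Real.sqrt_sq_eq_abs, hsqrtpow]
      _ = |G y| := by
          rw [hGdef]
          rw [abs_mul, abs_mul, abs_of_pos hαpos,
            abs_of_pos (Real.rpow_pos_of_pos hθy _)]
          ring
  have hJeq : J = ∫ y in (0:ℝ)..1, f y * g y := by
    rw [hJdef]
    apply intervalIntegral.integral_congr
    intro y hy
    rw [Set.uIcc_of_le h01] at hy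
    exact (hpt y hy).symm
  have hCS := cs_interval f g hfc hgc
  have hf2eq : (∫ y in (0:ℝ)..1, f y ^ 2) = D := by
    rw [hDdef]
    apply intervalIntegral.integral_congr
    intro y hy
    rw [Set.uIcc_of_le h01] at hy
    simp only [hfdef]
    rw [sq]
    exact Real.mul_self_sqrt (hQnonneg y hy)
  have hg2eq : (∫ y in (0:ℝ)..1, g y ^ 2) = α ^ 2 * E := by
    have hcongr : (∫ y in (0:ℝ)..1, g y ^ 2)
        = ∫ y in (0:ℝ)..1, α ^ 2 * (v y * θ y) := by
      apply intervalIntegral.integral_congr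
      intro y hy
      rw [Set.uIcc_of_le h01] at hy
      have hθy := hθpos y hy
      have hvy := hvpos y hy
      simp only [hgdef]
      rw [mul_pow, sq (Real.sqrt _), Real.mul_self_sqrt (by positivity : (0:ℝ) ≤ v y * θ y)]
    rw [hcongr, intervalIntegral.integral_const_mul, hEdef]
  have hJ2 : J ^ 2 ≤ D * (α ^ 2 * E) := by
    rw [hJeq]; rw [hf2eq, hg2eq] at hCS; exact hCS
  have hD0 : 0 ≤ D :=
    intervalIntegral.integral_nonneg h01 hQnonneg
  have hE0 : 0 ≤ E :=
    intervalIntegral.integral_nonneg h01 (fun y hy => by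
      have := hθpos y hy; have := hvpos y hy; positivity)
  -- assemble
  have h2α : α * 2 = 2 + β - η := by rw [hαdef]; ring
  have hsq : ∀ z : ℝ, 0 < z → z ^ (2 + β - η) = (z ^ α) ^ 2 := by
    intro z hz
    rw [← h2α, Real.rpow_mul hz.le, Real.rpow_two]
  rw [hsq (θ x) (hθpos x hx), hsq I hIpos]
  have hTnn : (0:ℝ) ≤ θ x ^ α := (Real.rpow_pos_of_pos (hθpos x hx) α).le
  have hInn : (0:ℝ) ≤ I ^ α := (Real.rpow_pos_of_pos hIpos α).le
  nlinarith [sq_nonneg (I ^ α - J), sq_nonneg (I ^ α), mul_nonneg hD0 hE0,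
    mul_nonneg hInn hJ0, sq_nonneg α, mul_nonneg (mul_nonneg hD0 hE0) (sq_nonneg α)]
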